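/- arXiv:1708.01517 — 2 statements merged into one kernel-verified Lean document; each statement's English description precedes it below -/
import Mathlib

section
/- Let N ≥ 1 and let x_1, …, x_N, α_1, …, α_N be real numbers with 0 < x_1 < x_2 < … < x_N and α_1 < α_2 < … < α_N. Then the N×N generalized Vandermonde matrix whose (i,j) entry is x_j^{α_i} (real power, x_j^{α_i} = exp(α_i · log x_j)) has strictly positive determinant. -/
open Real Finset Filter Topology

private lemma expPoly_eq_zero : ∀ (n : ℕ) (α c t : Fin n → ℝ), StrictMono α → StrictMono t →
    (∀ j, ∑ i, c i * Real.exp (α i * t j) = 0) → ∀ i, c i = 0 := by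
  intro n
  induction n with
  | zero => intro α c t _ _ _ i; exact i.elim0
  | succ n ih =>
    intro α c t hα ht hz
    set β : Fin (n+1) → ℝ := fun i => α i - α 0 with hβ
    set g : ℝ → ℝ := fun s => ∑ i, c i * Real.exp (β i * s) with hg
    have key : ∀ (i : Fin (n+1)) (s : ℝ),
        Real.exp (β i * s) = Real.exp (-(α 0 * s)) * Real.exp (α i * s) := by
      intro i s; rw [← Real.exp_add]; congr 1; simp [hβ]; ring
    have hgz : ∀ j, g (t j) = 0 := by
      intro j
      have : g (t j) = Real.exp (-(α 0 * t j)) * ∑ i, c i * Real.exp (α i * t j) := by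
        rw [hg, Finset.mul_sum]
        refine Finset.sum_congr rfl fun i _ => ?_
        rw [key i (t j)]; ring
      rw [this, hz j, mul_zero]
    have hderiv : ∀ s : ℝ, HasDerivAt g (∑ i, (c i * β i) * Real.exp (β i * s)) s := by
      intro s
      have := HasDerivAt.fun_sum (u := Finset.univ)
        (A := fun (i : Fin (n+1)) (x : ℝ) => c i * Real.exp (β i * x))
        (A' := fun i => (c i * β i) * Real.exp (β i * s)) (x := s) ?_
      · exact this
      · intro i _
        have h1 : HasDerivAt (fun x : ℝ => β i * x) (β i) s := by
          simpa using (hasDerivAt_id s).const_mul (β i)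
        have h2 := h1.exp
        have h3 := h2.const_mul (c i)
        convert h3 using 1
        · rfl
        ring
    have hgcont : Continuous g := by
      apply continuous_finset_sum
      intro i _
      exact (continuous_const.mul ((continuous_const.mul continuous_id).rexp))
    -- Rolle points
    have hroll : ∀ j : Fin n, ∃ u, u ∈ Set.Ioo (t j.castSucc) (t j.succ) ∧
        ∑ i, (c i * β i) * Real.exp (β i * u) = 0 := by
      intro j
      obtain ⟨u, hu, hdu⟩ := exists_deriv_eq_zero (f := g) (ht (Fin.castSucc_lt_succ (i := j)))
        hgcont.continuousOn (by rw [hgz, hgz])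
      refine ⟨u, hu, ?_⟩
      rw [← (hderiv u).deriv]; exact hdu
    choose u hu hdu using hroll
    have hu_mono : StrictMono u := by
      intro j j' hjj'
      calc u j < t j.succ := (hu j).2
        _ ≤ t j'.castSucc := ht.monotone (Fin.succ_le_castSucc_iff.mpr hjj')
        _ < u j' := (hu j').1
    have hsucc0 : ∀ i : Fin n, c i.succ * β i.succ = 0 := by
      apply ih (fun i => β i.succ) (fun i => c i.succ * β i.succ) u
        (fun a b hab => sub_lt_sub_right (hα (Fin.succ_lt_succ_iff.mpr hab)) _) hu_mono
      intro j
      have := hdu j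
      rw [Fin.sum_univ_succ] at this
      have hβ0 : β 0 = 0 := by simp [hβ]
      simpa [hβ0] using this
    have hcsucc : ∀ i : Fin n, c i.succ = 0 := by
      intro i
      have hβpos : β i.succ ≠ 0 := sub_ne_zero.mpr (hα (Fin.succ_pos i)).ne'
      rcases mul_eq_zero.mp (hsucc0 i) with h | h
      · exact h
      · exact absurd h hβpos
    have hc0 : c 0 = 0 := by
      have h0 := hgz 0
      simp only [hg, Fin.sum_univ_succ, hcsucc, zero_mul, Finset.sum_const_zero, add_zero,
        hβ, sub_self, Real.exp_zero, mul_one] at h0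
      exact h0
    intro i
    refine Fin.cases hc0 hcsucc i

private lemma exp_vandermonde_det_pos : ∀ (N : ℕ) (t α : Fin N → ℝ), StrictMono t → StrictMono α →
    0 < (Matrix.of fun i j => Real.exp (α i * t j)).det := by
  intro N
  induction N with
  | zero => intro t α _ _; simp [Matrix.det_fin_zero]
  | succ N ih =>
    intro t α ht hα
    set c : Fin (N+1) → ℝ := fun i =>
      (-1 : ℝ) ^ ((i : ℕ) + N) *
        (Matrix.of fun (k l : Fin N) => Real.exp (α (i.succAbove k) * t l.castSucc)).det with hc
    set M : ℝ → Matrix (Fin (N+1)) (Fin (N+1)) ℝ := fun s =>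
      Matrix.of fun i j => if j = Fin.last N then Real.exp (α i * s) else Real.exp (α i * t j)
      with hM
    set f : ℝ → ℝ := fun s => ∑ i, c i * Real.exp (α i * s) with hf
    have hdet : ∀ s, (M s).det = f s := by
      intro s
      rw [Matrix.det_succ_column (M s) (Fin.last N)]
      refine Finset.sum_congr rfl fun i _ => ?_
      have h1 : (M s) i (Fin.last N) = Real.exp (α i * s) := by simp [hM]
      have h2 : (M s).submatrix i.succAbove (Fin.last N).succAbove =
          Matrix.of fun (k l : Fin N) => Real.exp (α (i.succAbove k) * t l.castSucc) := by
        ext k l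
        simp [hM, Fin.succAbove_last, (Fin.castSucc_lt_last l).ne]
      rw [h1, h2, hc]
      simp only [Fin.val_last]
      ring
    have hclast : 0 < c (Fin.last N) := by
      have hceq : c (Fin.last N) =
          (Matrix.of fun (k l : Fin N) => Real.exp (α k.castSucc * t l.castSucc)).det := by
        simp [hc, Fin.succAbove_last, show ((-1 : ℝ)) ^ (N + N) = 1 from Even.neg_one_pow ⟨N, rfl⟩]
      rw [hceq]
      exact ih (fun l => t l.castSucc) (fun k => α k.castSucc)
        (fun a b hab => ht (Fin.strictMono_castSucc hab))
        (fun a b hab => hα (Fin.strictMono_castSucc hab))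
    have hzero : ∀ j : Fin N, f (t j.castSucc) = 0 := by
      intro j
      rw [← hdet]
      apply Matrix.det_zero_of_column_eq (i := j.castSucc) (j := Fin.last N)
        (Fin.castSucc_lt_last j).ne
      intro k
      simp [hM, (Fin.castSucc_lt_last j).ne]
    have hne : ∀ s, t (Fin.last N) ≤ s → f s ≠ 0 := by
      intro s hs hfs
      set v : Fin (N+1) → ℝ := fun j => if j = Fin.last N then s else t j with hv
      have hlt : ∀ j : Fin (N+1), j ≠ Fin.last N → t j < s := by
        intro j hj
        exact lt_of_lt_of_le (ht (Fin.lt_last_iff_ne_last.mpr hj)) hs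
      have hv_mono : StrictMono v := by
        intro a b hab
        by_cases hb : b = Fin.last N
        · have ha : a ≠ Fin.last N := by
            intro h; rw [h, hb] at hab; exact lt_irrefl _ hab
          simp [hv, ha, hb]
          exact hlt a ha
        · have ha : a ≠ Fin.last N := by
            intro h
            exact hb (le_antisymm (Fin.le_last b) (h ▸ hab.le))
          simp [hv, ha, hb]
          exact ht hab
      have hvz : ∀ j, ∑ i, c i * Real.exp (α i * v j) = 0 := by
        intro j
        by_cases hj : j = Fin.last N
        · simp only [hv, hj, if_pos rfl]; exact hfs
        · obtain ⟨k, rfl⟩ := Fin.exists_castSucc_eq.mpr hj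
          simp only [hv, if_neg hj]
          exact hzero k
      have := expPoly_eq_zero (N+1) α c v hα hv_mono hvz (Fin.last N)
      exact hclast.ne' this
    have hcont : Continuous f := by
      apply continuous_finset_sum
      intro i _
      exact (continuous_const.mul ((continuous_const.mul continuous_id).rexp))
    -- f is eventually positive
    have htend : Tendsto (fun s => ∑ i, c i * Real.exp ((α i - α (Fin.last N)) * s)) atTop
        (𝓝 (c (Fin.last N))) := by
      have : (c (Fin.last N)) = ∑ i : Fin (N+1), if i = Fin.last N then c (Fin.last N) else 0 := by
        simp
      rw [this]
      apply tendsto_finset_sum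
      intro i _
      by_cases hi : i = Fin.last N
      · subst hi
        simp only [if_pos rfl, sub_self, zero_mul, Real.exp_zero, mul_one]
        exact tendsto_const_nhds
      · rw [if_neg hi]
        have hneg : α i - α (Fin.last N) < 0 :=
          sub_neg.mpr (hα (Fin.lt_last_iff_ne_last.mpr hi))
        have h1 : Tendsto (fun s : ℝ => (α i - α (Fin.last N)) * s) atTop atBot :=
          (tendsto_const_mul_atBot_of_neg hneg).mpr tendsto_id
        have h2 := Real.tendsto_exp_atBot.comp h1
        have := h2.const_mul (c i)
        simpa using this
    have hgpos : ∀ᶠ s in atTop, 0 < ∑ i, c i * Real.exp ((α i - α (Fin.last N)) * s) :=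
      htend.eventually (eventually_gt_nhds hclast)
    obtain ⟨S, hS1, hS2⟩ := ((eventually_ge_atTop (t (Fin.last N))).and hgpos).exists
    have hfS : 0 < f S := by
      have heq : f S = Real.exp (α (Fin.last N) * S) *
          ∑ i, c i * Real.exp ((α i - α (Fin.last N)) * S) := by
        rw [hf, Finset.mul_sum]
        refine Finset.sum_congr rfl fun i _ => ?_
        rw [show Real.exp (α i * S) = Real.exp (α (Fin.last N) * S) *
            Real.exp ((α i - α (Fin.last N)) * S) by rw [← Real.exp_add]; congr 1; ring]
        ring
      rw [heq]
      exact mul_pos (Real.exp_pos _) hS2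
    have hftlast : 0 < f (t (Fin.last N)) := by
      rcases lt_trichotomy (f (t (Fin.last N))) 0 with h | h | h
      · exfalso
        have hmem : (0 : ℝ) ∈ Set.Icc (f (t (Fin.last N))) (f S) := ⟨h.le, hfS.le⟩
        have := intermediate_value_Icc hS1 hcont.continuousOn hmem
        obtain ⟨z, hz, hfz⟩ := this
        exact hne z hz.1 hfz
      · exact absurd h (hne _ le_rfl)
      · exact h
    have hfinal : (Matrix.of fun i j => Real.exp (α i * t j)).det = f (t (Fin.last N)) := by
      rw [← hdet]
      congr 1
      ext i j
      by_cases h : j = Fin.last N <;> simp [hM, h]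
    rw [hfinal]
    exact hftlast

/-- Generalized Vandermonde determinant: if `0 < x 0 < x 1 < … < x (N-1)` and
`α 0 < α 1 < … < α (N-1)`, then the matrix with entries `x j ^ α i` (real powers)
has strictly positive determinant. -/
theorem generalized_vandermonde_det_pos (N : ℕ) (hN : 1 ≤ N)
    (x α : Fin N → ℝ) (hx0 : ∀ j, 0 < x j) (hx : StrictMono x) (hα : StrictMono α) :
    0 < Matrix.det (Matrix.of fun (i j : Fin N) => x j ^ α i) := by
  have ht : StrictMono (fun j => Real.log (x j)) :=
    fun a b h => Real.log_lt_log (hx0 a) (hx h)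
  have := exp_vandermonde_det_pos N (fun j => Real.log (x j)) α ht hα
  convert this using 2
  ext i j
  simp only [Matrix.of_apply]
  rw [Real.rpow_def_of_pos (hx0 j), mul_comm]
end

section
/- Let 0 < h₁ < h₂ be real numbers, let N ≥ 1 and let j_1 < j_2 < … < j_N be positive integers. Then for every c = (c_1,…,c_N) ∈ ℝ^N with c ≠ 0, the function h ↦ Σ_{i=1}^N c_i · (j_i · tanh(h·j_i))^{1/2} is not identically zero on [h₁, h₂]: there exists h ∈ [h₁, h₂] such that Σ_{i=1}^N c_i ω_{j_i}(h) ≠ 0. (Equivalently, the frequency vector (ω_{j_1}(h),…,ω_{j_N}(h)) is non-degenerate on [h₁,h₂] in the sense that its image is not contained in any hyperplane through the origin.) -/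
open Real Filter Topology

lemma tanh_eq' (x : ℝ) : Real.tanh x = (1 - Real.exp (-(2*x))) / (1 + Real.exp (-(2*x))) := by
  rw [Real.tanh_eq_sinh_div_cosh, Real.sinh_eq, Real.cosh_eq]
  have h1 : Real.exp x ≠ 0 := (Real.exp_pos x).ne'
  have h2 : (0:ℝ) < 1 + Real.exp (-(2*x)) := by positivity
  have h3 : Real.exp x + Real.exp (-x) ≠ 0 := by positivity
  rw [div_eq_div_iff (by positivity) h2.ne']
  have e2 : Real.exp (-(2*x)) = Real.exp (-x) * Real.exp (-x) := by
    rw [← Real.exp_add]; ring_nf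
  have e1 : Real.exp x * Real.exp (-x) = 1 := by rw [← Real.exp_add]; simp
  rw [e2]
  linear_combination Real.exp (-x) * e1

lemma exp_lim (b : ℝ) (hb : b < 0) : Tendsto (fun h : ℝ => Real.exp (h * b)) atTop (𝓝 0) :=
  Real.tendsto_exp_atBot.comp (tendsto_id.atTop_mul_const_of_neg hb)

lemma exp_neg_lim (a : ℝ) (ha : 0 < a) :
    Tendsto (fun h : ℝ => Real.exp (-(2 * (h * a)))) atTop (𝓝 0) :=
  (exp_lim (-(2*a)) (by linarith)).congr (fun h => by rw [show h * -(2*a) = -(2*(h*a)) by ring])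

lemma tanh_lim (a : ℝ) (ha : 0 < a) :
    Tendsto (fun h : ℝ => Real.tanh (h * a)) atTop (𝓝 1) := by
  have h0 := exp_neg_lim a ha
  simp only [tanh_eq']
  have hden : Tendsto (fun h : ℝ => 1 + Real.exp (-(2*(h*a)))) atTop (𝓝 1) := by
    simpa using (tendsto_const_nhds (x := (1:ℝ)) (f := atTop)).add h0
  have hnum : Tendsto (fun h : ℝ => 1 - Real.exp (-(2*(h*a)))) atTop (𝓝 1) := by
    simpa using (tendsto_const_nhds (x := (1:ℝ)) (f := atTop)).sub h0
  simpa [Pi.div_def] using hnum.div hden one_ne_zero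

lemma aux_E (a b m : ℝ) (ha : 0 < a)
    (hm : Tendsto (fun h : ℝ => Real.exp (h * (2*(b-a)))) atTop (𝓝 m)) :
    Tendsto (fun h : ℝ => Real.exp (2*(h*b)) * (Real.tanh (h*a) - 1)) atTop (𝓝 (-2*m)) := by
  have h0 := exp_neg_lim a ha
  have key : ∀ h : ℝ, Real.exp (2*(h*b)) * (Real.tanh (h*a) - 1)
      = (-2 * Real.exp (h*(2*(b-a)))) / (1 + Real.exp (-(2*(h*a)))) := by
    intro h
    have d : (0:ℝ) < 1 + Real.exp (-(2*(h*a))) := by positivity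
    have e : Real.exp (2*(h*b)) * Real.exp (-(2*(h*a))) = Real.exp (h*(2*(b-a))) := by
      rw [← Real.exp_add]; ring_nf
    rw [tanh_eq', eq_div_iff d.ne']
    rw [div_sub_one d.ne', mul_assoc, div_mul_cancel₀ _ d.ne']
    linear_combination (-2:ℝ) * e
  refine Tendsto.congr (fun h => (key h).symm) ?_
  have hden : Tendsto (fun h : ℝ => 1 + Real.exp (-(2*(h*a)))) atTop (𝓝 1) := by
    simpa using (tendsto_const_nhds (x := (1:ℝ)) (f := atTop)).add h0
  simpa [Pi.div_def] using (hm.const_mul (-2)).div hden one_ne_zero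

lemma key_zero : ∀ (N : ℕ) (j : Fin N → ℕ), (∀ i, 1 ≤ j i) → StrictMono j →
    ∀ c : Fin N → ℝ,
    (∀ h : ℝ, 0 < h → ∑ i, c i * Real.sqrt ((j i : ℝ) * Real.tanh (h * (j i : ℝ))) = 0) →
    ∀ i, c i = 0 := by
  intro N
  induction N with
  | zero => intro j _ _ c _ i; exact i.elim0
  | succ N ih =>
    intro j hj1 hj c hf
    have ha : ∀ i : Fin (N+1), (0:ℝ) < (j i : ℝ) := fun i => by
      exact_mod_cast Nat.lt_of_lt_of_le Nat.zero_lt_one (hj1 i)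
    -- Step 1: ∑ c i * √(j i) = 0
    have hωlim : ∀ i : Fin (N+1),
        Tendsto (fun h : ℝ => c i * Real.sqrt ((j i : ℝ) * Real.tanh (h * (j i : ℝ))))
          atTop (𝓝 (c i * Real.sqrt (j i : ℝ))) := by
      intro i
      have hcont : Continuous fun t : ℝ => c i * Real.sqrt ((j i : ℝ) * t) := by
        exact continuous_const.mul (Real.continuous_sqrt.comp (continuous_const.mul continuous_id))
      have := (hcont.tendsto 1).comp (tanh_lim (j i : ℝ) (ha i))
      simpa [Function.comp_def] using this
    have hsum : Tendsto
        (fun h : ℝ => ∑ i, c i * Real.sqrt ((j i : ℝ) * Real.tanh (h * (j i : ℝ))))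
        atTop (𝓝 (∑ i, c i * Real.sqrt (j i : ℝ))) :=
      tendsto_finset_sum _ (fun i _ => hωlim i)
    have hev : (fun h : ℝ => ∑ i, c i * Real.sqrt ((j i : ℝ) * Real.tanh (h * (j i : ℝ))))
        =ᶠ[atTop] (fun _ => 0) := by
      filter_upwards [eventually_gt_atTop 0] with h hh
      exact hf h hh
    have h1 : ∑ i, c i * Real.sqrt (j i : ℝ) = 0 :=
      tendsto_nhds_unique hsum ((tendsto_congr' hev).mpr tendsto_const_nhds)
    -- Step 2: c 0 = 0
    set b : ℝ := (j 0 : ℝ) with hb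
    set G2 : ℝ → ℝ := fun h => ∑ i, c i * (Real.exp (2*(h*b)) * (Real.tanh (h * (j i : ℝ)) - 1))
        * ((j i : ℝ) / (Real.sqrt ((j i : ℝ) * Real.tanh (h * (j i : ℝ))) + Real.sqrt (j i : ℝ)))
      with hG2
    have hG2zero : ∀ h : ℝ, 0 < h → G2 h = 0 := by
      intro h hh
      have term_eq : ∀ i : Fin (N+1),
          c i * (Real.exp (2*(h*b)) * (Real.tanh (h * (j i : ℝ)) - 1))
            * ((j i : ℝ) / (Real.sqrt ((j i : ℝ) * Real.tanh (h * (j i : ℝ))) + Real.sqrt (j i : ℝ)))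
          = Real.exp (2*(h*b)) * (c i * Real.sqrt ((j i : ℝ) * Real.tanh (h * (j i : ℝ)))
              - c i * Real.sqrt (j i : ℝ)) := by
        intro i
        have hai := ha i
        have ht : 0 < Real.tanh (h * (j i : ℝ)) := by
          rw [Real.tanh_eq_sinh_div_cosh]
          exact div_pos (Real.sinh_pos_iff.mpr (by positivity)) (Real.cosh_pos _)
        have hprod : 0 < (j i : ℝ) * Real.tanh (h * (j i : ℝ)) := mul_pos hai ht
        have hD : 0 < Real.sqrt ((j i : ℝ) * Real.tanh (h * (j i : ℝ))) + Real.sqrt (j i : ℝ) := by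
          have := Real.sqrt_pos.mpr hai
          positivity
        have hsq1 : Real.sqrt ((j i : ℝ) * Real.tanh (h * (j i : ℝ))) ^ 2
            = (j i : ℝ) * Real.tanh (h * (j i : ℝ)) := Real.sq_sqrt hprod.le
        have hsq2 : Real.sqrt (j i : ℝ) ^ 2 = (j i : ℝ) := Real.sq_sqrt hai.le
        have hdiff : Real.sqrt ((j i : ℝ) * Real.tanh (h * (j i : ℝ))) - Real.sqrt (j i : ℝ)
            = (j i : ℝ) * (Real.tanh (h * (j i : ℝ)) - 1)
              / (Real.sqrt ((j i : ℝ) * Real.tanh (h * (j i : ℝ))) + Real.sqrt (j i : ℝ)) := by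
          rw [eq_div_iff hD.ne']
          linear_combination hsq1 - hsq2
        have : c i * Real.sqrt ((j i : ℝ) * Real.tanh (h * (j i : ℝ))) - c i * Real.sqrt (j i : ℝ)
            = c i * ((j i : ℝ) * (Real.tanh (h * (j i : ℝ)) - 1)
              / (Real.sqrt ((j i : ℝ) * Real.tanh (h * (j i : ℝ))) + Real.sqrt (j i : ℝ))) := by
          rw [← hdiff]; ring
        rw [this]
        ring
      rw [hG2]
      simp only [term_eq]
      rw [← Finset.mul_sum]
      have : ∑ i, (c i * Real.sqrt ((j i : ℝ) * Real.tanh (h * (j i : ℝ)))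
          - c i * Real.sqrt (j i : ℝ)) = 0 := by
        rw [Finset.sum_sub_distrib, hf h hh, h1, sub_zero]
      rw [this, mul_zero]
    -- limit of G2
    have hterm : ∀ i : Fin (N+1),
        Tendsto (fun h : ℝ => c i * (Real.exp (2*(h*b)) * (Real.tanh (h * (j i : ℝ)) - 1))
            * ((j i : ℝ) / (Real.sqrt ((j i : ℝ) * Real.tanh (h * (j i : ℝ))) + Real.sqrt (j i : ℝ))))
          atTop (𝓝 (c i * (-2 * (if i = 0 then (1:ℝ) else 0))
            * ((j i : ℝ) / (Real.sqrt (j i : ℝ) + Real.sqrt (j i : ℝ))))) := by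
      intro i
      have hE : Tendsto (fun h : ℝ => Real.exp (2*(h*b)) * (Real.tanh (h * (j i : ℝ)) - 1))
          atTop (𝓝 (-2 * (if i = 0 then (1:ℝ) else 0))) := by
        apply aux_E (j i : ℝ) b _ (ha i)
        by_cases h0 : i = 0
        · subst h0
          simp only [if_pos rfl, hb, sub_self, mul_zero]
          simpa using (tendsto_const_nhds (x := (1:ℝ)) (f := atTop))
        · rw [if_neg h0]
          apply exp_lim
          have : (j 0 : ℝ) < (j i : ℝ) := by
            exact_mod_cast hj (Fin.pos_of_ne_zero h0)
          linarith
      have hQ : Tendsto (fun h : ℝ =>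
          (j i : ℝ) / (Real.sqrt ((j i : ℝ) * Real.tanh (h * (j i : ℝ))) + Real.sqrt (j i : ℝ)))
          atTop (𝓝 ((j i : ℝ) / (Real.sqrt (j i : ℝ) + Real.sqrt (j i : ℝ)))) := by
        have hcont : Continuous fun t : ℝ =>
            Real.sqrt ((j i : ℝ) * t) + Real.sqrt (j i : ℝ) := by
          exact (Real.continuous_sqrt.comp (continuous_const.mul continuous_id)).add continuous_const
        have hden := (hcont.tendsto 1).comp (tanh_lim (j i : ℝ) (ha i))
        simp only [Function.comp_def] at hden
        rw [mul_one] at hden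
        refine Tendsto.div tendsto_const_nhds hden ?_
        have := Real.sqrt_pos.mpr (ha i)
        positivity
      simpa using (hE.const_mul (c i)).mul hQ
    have hG2lim : Tendsto G2 atTop (𝓝 (∑ i, c i * (-2 * (if i = 0 then (1:ℝ) else 0))
        * ((j i : ℝ) / (Real.sqrt (j i : ℝ) + Real.sqrt (j i : ℝ))))) :=
      tendsto_finset_sum _ (fun i _ => hterm i)
    have hevG2 : G2 =ᶠ[atTop] (fun _ => 0) := by
      filter_upwards [eventually_gt_atTop 0] with h hh
      exact hG2zero h hh
    have hL : (∑ i, c i * (-2 * (if i = 0 then (1:ℝ) else 0))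
        * ((j i : ℝ) / (Real.sqrt (j i : ℝ) + Real.sqrt (j i : ℝ)))) = 0 :=
      tendsto_nhds_unique hG2lim ((tendsto_congr' hevG2).mpr tendsto_const_nhds)
    rw [Fin.sum_univ_succ] at hL
    simp [Fin.succ_ne_zero] at hL
    have hc0 : c 0 = 0 := by
      rcases hL with h' | h'
      · exact h'
      · exact absurd h' (Nat.one_le_iff_ne_zero.mp (hj1 0))
    -- Step 3: tail
    have htail := ih (j ∘ Fin.succ) (fun i => hj1 _) (hj.comp Fin.strictMono_succ)
      (c ∘ Fin.succ) ?_
    · intro i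
      refine Fin.cases hc0 (fun k => htail k) i
    · intro h hh
      have := hf h hh
      rw [Fin.sum_univ_succ, hc0, zero_mul, zero_add] at this
      simpa using this

lemma tanh_pos {x : ℝ} (hx : 0 < x) : 0 < Real.tanh x := by
  rw [Real.tanh_eq_sinh_div_cosh]
  exact div_pos (Real.sinh_pos_iff.mpr hx) (Real.cosh_pos _)

lemma sqrt_eq_exp' {y : ℝ} (hy : 0 < y) : Real.sqrt y = Real.exp (Real.log y / 2) := by
  rw [Real.sqrt_eq_rpow, Real.rpow_def_of_pos hy]
  ring_nf

lemma term_analyticC (a : ℝ) (ha : 0 < a) (x : ℝ) (hx : 0 < x) :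
    AnalyticAt ℂ (fun z : ℂ => Complex.exp (Complex.log ((a:ℂ) * Complex.tanh (z * (a:ℂ))) / 2))
      (x : ℂ) := by
  have hlin : AnalyticAt ℂ (fun z : ℂ => z * (a:ℂ)) (x:ℂ) := analyticAt_id.mul analyticAt_const
  have hsinh : AnalyticAt ℂ (fun z : ℂ => Complex.sinh (z * (a:ℂ))) (x:ℂ) := by
    have heq : (fun z : ℂ => Complex.sinh (z * (a:ℂ)))
        = fun z : ℂ => (Complex.exp (z * (a:ℂ)) - Complex.exp (-(z * (a:ℂ)))) / 2 := by
      funext z; rfl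
    rw [heq]
    exact ((analyticAt_cexp.comp hlin).sub (analyticAt_cexp.comp hlin.neg)).div
      analyticAt_const (by norm_num)
  have hcosh : AnalyticAt ℂ (fun z : ℂ => Complex.cosh (z * (a:ℂ))) (x:ℂ) := by
    have heq : (fun z : ℂ => Complex.cosh (z * (a:ℂ)))
        = fun z : ℂ => (Complex.exp (z * (a:ℂ)) + Complex.exp (-(z * (a:ℂ)))) / 2 := by
      funext z; rfl
    rw [heq]
    exact ((analyticAt_cexp.comp hlin).add (analyticAt_cexp.comp hlin.neg)).div
      analyticAt_const (by norm_num)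
  have hcast : (x:ℂ) * (a:ℂ) = ((x * a : ℝ) : ℂ) := by push_cast; ring
  have hcoshne : Complex.cosh ((x:ℂ) * (a:ℂ)) ≠ 0 := by
    rw [hcast, ← Complex.ofReal_cosh]
    exact_mod_cast (Real.cosh_pos (x * a)).ne'
  have htanh : AnalyticAt ℂ (fun z : ℂ => Complex.tanh (z * (a:ℂ))) (x:ℂ) := by
    have heq : (fun z : ℂ => Complex.tanh (z * (a:ℂ)))
        = fun z : ℂ => Complex.sinh (z * (a:ℂ)) / Complex.cosh (z * (a:ℂ)) := by
      funext z; rfl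
    rw [heq]
    exact hsinh.div hcosh hcoshne
  have harg : AnalyticAt ℂ (fun z : ℂ => (a:ℂ) * Complex.tanh (z * (a:ℂ))) (x:ℂ) :=
    analyticAt_const.mul htanh
  have hval : (a:ℂ) * Complex.tanh ((x:ℂ) * (a:ℂ)) ∈ Complex.slitPlane := by
    rw [hcast, ← Complex.ofReal_tanh, ← Complex.ofReal_mul]
    exact Complex.ofReal_mem_slitPlane.mpr (mul_pos ha (tanh_pos (mul_pos hx ha)))
  have hlog : AnalyticAt ℂ (fun z : ℂ => Complex.log ((a:ℂ) * Complex.tanh (z * (a:ℂ)))) (x:ℂ) :=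
    AnalyticAt.comp (g := Complex.log)
      (f := fun z : ℂ => (a:ℂ) * Complex.tanh (z * (a:ℂ))) (analyticAt_clog hval) harg
  have hdiv : AnalyticAt ℂ (fun z : ℂ => Complex.log ((a:ℂ) * Complex.tanh (z * (a:ℂ))) / 2)
      (x:ℂ) := hlog.div analyticAt_const two_ne_zero
  exact analyticAt_cexp.comp hdiv


/-- Non-degeneracy of the linear frequencies ω_j(h) = √(j·tanh(h·j)): for any finitely many
distinct positive integers j_1 < … < j_N and any nonzero vector c ∈ ℝ^N, the function
h ↦ Σ c_i ω_{j_i}(h) is not identically zero on [h₁, h₂]. -/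
theorem frequencies_nondegenerate (h₁ h₂ : ℝ) (hh₁ : 0 < h₁) (hh : h₁ < h₂)
    (N : ℕ) (hN : 1 ≤ N) (j : Fin N → ℕ) (hj1 : ∀ i, 1 ≤ j i) (hj : StrictMono j)
    (c : Fin N → ℝ) (hc : c ≠ 0) :
    ∃ h ∈ Set.Icc h₁ h₂,
      (∑ i, c i * Real.sqrt ((j i : ℝ) * Real.tanh (h * (j i : ℝ)))) ≠ 0 := by
  by_contra hcon
  push_neg at hcon
  have ha : ∀ i : Fin N, (0:ℝ) < (j i : ℝ) := fun i => by
    exact_mod_cast Nat.lt_of_lt_of_le Nat.zero_lt_one (hj1 i)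
  set G : ℂ → ℂ := fun z => ∑ i, (c i : ℂ) *
    Complex.exp (Complex.log (((j i : ℝ) : ℂ) * Complex.tanh (z * ((j i : ℝ) : ℂ))) / 2) with hG
  set F : ℝ → ℝ := fun x => (G (x:ℂ)).re with hF
  have hFan : AnalyticOnNhd ℝ F (Set.Ioi 0) := by
    intro x hx
    have hGx : AnalyticAt ℂ G (x:ℂ) :=
      Finset.analyticAt_fun_sum _ (fun i _ => analyticAt_const.mul (term_analyticC _ (ha i) x hx))
    have h1 : AnalyticAt ℝ (⇑Complex.reCLM ∘ G ∘ ⇑Complex.ofRealCLM) x :=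
      (Complex.reCLM.analyticAt _).comp
        ((hGx.restrictScalars (𝕜 := ℝ)).comp (Complex.ofRealCLM.analyticAt x))
    exact h1
  have hFeq : ∀ x : ℝ, 0 < x →
      F x = ∑ i, c i * Real.sqrt ((j i : ℝ) * Real.tanh (x * (j i : ℝ))) := by
    intro x hx
    have hterm : ∀ i : Fin N, (c i : ℂ) *
        Complex.exp (Complex.log (((j i : ℝ):ℂ) * Complex.tanh ((x:ℂ) * ((j i : ℝ):ℂ))) / 2)
        = ((c i * Real.sqrt ((j i : ℝ) * Real.tanh (x * (j i : ℝ))) : ℝ) : ℂ) := by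
      intro i
      have hy : (0:ℝ) < (j i : ℝ) * Real.tanh (x * (j i : ℝ)) :=
        mul_pos (ha i) (tanh_pos (mul_pos hx (ha i)))
      have hcast : (x:ℂ) * ((j i : ℝ):ℂ) = ((x * (j i : ℝ) : ℝ):ℂ) := by push_cast; ring
      rw [hcast, ← Complex.ofReal_tanh, ← Complex.ofReal_mul, ← Complex.ofReal_log hy.le,
        sqrt_eq_exp' hy]
      push_cast
      ring
    have hFx : F x = (∑ i, (c i : ℂ) *
        Complex.exp (Complex.log (((j i : ℝ):ℂ) * Complex.tanh ((x:ℂ) * ((j i : ℝ):ℂ))) / 2)).re :=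
      rfl
    rw [hFx, Complex.re_sum]
    refine Finset.sum_congr rfl (fun i _ => ?_)
    rw [hterm i, Complex.ofReal_re]
  set m : ℝ := (h₁ + h₂) / 2 with hm
  have hF0 : F =ᶠ[𝓝 m] 0 := by
    have hmem : Set.Ioo h₁ h₂ ∈ 𝓝 m :=
      isOpen_Ioo.mem_nhds ⟨by simp only [hm]; linarith, by simp only [hm]; linarith⟩
    filter_upwards [hmem] with y hy
    have hy0 : 0 < y := lt_trans hh₁ hy.1
    show F y = 0
    rw [hFeq y hy0]
    exact hcon y ⟨hy.1.le, hy.2.le⟩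
  have hEq : Set.EqOn F 0 (Set.Ioi 0) :=
    hFan.eqOn_zero_of_preconnected_of_eventuallyEq_zero isPreconnected_Ioi
      (show m ∈ Set.Ioi (0:ℝ) by simp only [Set.mem_Ioi, hm]; linarith) hF0
  have hzero : ∀ h : ℝ, 0 < h →
      ∑ i, c i * Real.sqrt ((j i : ℝ) * Real.tanh (h * (j i : ℝ))) = 0 := by
    intro h hh
    rw [← hFeq h hh]
    exact hEq hh
  have hcz := key_zero N j hj1 hj c hzero
  exact hc (funext hcz)
end
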